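/- The group J₁ of determinant-one signed permutation transformations of ℂ^16 contains no subgroup isomorphic to the symmetric group Sym₁₆; moreover, there is no subgroup S ≤ J₁ possessing a central subgroup Z ≤ Z(S) of order 2 with S/Z isomorphic to Sym₁₆. -/

import Mathlib

/-- The double orthonormal basis `D = {±e_i}` of `ℂ^16`. -/
def doubleBasis : Set (Fin 16 → ℂ) :=
  {v | ∃ i : Fin 16, v = Pi.single i 1 ∨ v = -Pi.single i 1}

/-- The group `J₁` of signed permutation transformations of `ℂ^16` of
determinant one, as a subset of the group of linear automorphisms of `ℂ^16`:
those `g` with `g(D) = D` and `det g = 1`. -/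
def J1 : Set ((Fin 16 → ℂ) ≃ₗ[ℂ] (Fin 16 → ℂ)) :=
  {g | (⇑g) '' doubleBasis = doubleBasis ∧
    LinearMap.det (g : (Fin 16 → ℂ) →ₗ[ℂ] (Fin 16 → ℂ)) = 1}

noncomputable section AuxNoSym16

open Equiv Function

/-- standard basis vector -/
def ee (i : Fin 16) : Fin 16 → ℂ := Pi.single i 1

lemma ee_apply (i j : Fin 16) : ee i j = if j = i then 1 else 0 := by
  simp [ee, Pi.single_apply]

lemma ee_self (i : Fin 16) : ee i i = 1 := by simp [ee_apply]

lemma ee_apply_ne {i j : Fin 16} (h : j ≠ i) : ee i j = 0 := by simp [ee_apply, h]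

lemma smul_ee_eq_smul_ee {a b : ℂ} {p r : Fin 16} (ha : a ≠ 0)
    (h : a • ee p = b • ee r) : p = r ∧ a = b := by
  have hp : a = b * ee r p := by
    have := congrFun h p
    simpa [ee_self] using this
  by_cases hpr : p = r
  · subst hpr
    rw [ee_self, mul_one] at hp
    exact ⟨rfl, hp⟩
  · rw [ee_apply_ne hpr, mul_zero] at hp
    exact absurd hp ha

/-- `p` is the signed-permutation data of `g`. -/
def IsSP (g : (Fin 16 → ℂ) ≃ₗ[ℂ] (Fin 16 → ℂ)) (p : Perm (Fin 16) × (Fin 16 → ℂ)) : Prop :=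
  (∀ i, p.2 i = 1 ∨ p.2 i = -1) ∧ ∀ i, g (ee i) = p.2 i • ee (p.1 i)

lemma IsSP.sign_ne_zero {g p} (h : IsSP g p) (i : Fin 16) : p.2 i ≠ 0 := by
  rcases h.1 i with h' | h' <;> rw [h'] <;> norm_num

lemma IsSP.sq_one {g p} (h : IsSP g p) (i : Fin 16) : p.2 i * p.2 i = 1 := by
  rcases h.1 i with h' | h' <;> rw [h'] <;> ring

lemma isSP_unique {g : (Fin 16 → ℂ) ≃ₗ[ℂ] (Fin 16 → ℂ)} {p q} (hp : IsSP g p) (hq : IsSP g q) :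
    p = q := by
  have h1 : ∀ i, p.1 i = q.1 i ∧ p.2 i = q.2 i := by
    intro i
    have := (hp.2 i).symm.trans (hq.2 i)
    exact smul_ee_eq_smul_ee (hp.sign_ne_zero i) this
  exact Prod.ext (Equiv.ext fun i => (h1 i).1) (funext fun i => (h1 i).2)

lemma isSP_one : IsSP 1 (1, fun _ => 1) := by
  constructor
  · intro i; left; rfl
  · intro i; simp

lemma isSP_mul {g h : (Fin 16 → ℂ) ≃ₗ[ℂ] (Fin 16 → ℂ)} {p q} (hp : IsSP g p) (hq : IsSP h q) :
    IsSP (g * h) (p.1 * q.1, fun i => q.2 i * p.2 (q.1 i)) := by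
  constructor
  · intro i
    rcases hp.1 (q.1 i) with h1 | h1 <;> rcases hq.1 i with h2 | h2 <;>
      simp [h1, h2]
  · intro i
    show g (h (ee i)) = _
    rw [hq.2 i, map_smul, hp.2 (q.1 i), smul_smul]
    rfl

lemma exists_isSP {g : (Fin 16 → ℂ) ≃ₗ[ℂ] (Fin 16 → ℂ)}
    (hg : (⇑g) '' doubleBasis = doubleBasis) : ∃ p, IsSP g p := by
  have hmem : ∀ i : Fin 16, ∃ j : Fin 16, g (ee i) = ee j ∨ g (ee i) = -ee j := by
    intro i
    have hi : (ee i) ∈ doubleBasis := ⟨i, Or.inl rfl⟩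
    have hgi : g (ee i) ∈ doubleBasis := by
      rw [← hg]; exact ⟨ee i, hi, rfl⟩
    obtain ⟨j, hj⟩ := hgi
    exact ⟨j, by simpa [ee] using hj⟩
  choose f hf using hmem
  have hsp : ∀ i, g (ee i) = (if g (ee i) = ee (f i) then (1:ℂ) else -1) • ee (f i) := by
    intro i
    rcases hf i with h | h
    · rw [if_pos h, one_smul]; exact h
    · have hne : g (ee i) ≠ ee (f i) := by
        rw [h]; intro hcon
        have := congrFun hcon (f i)
        rw [Pi.neg_apply, ee_self] at this
        norm_num at this
      rw [if_neg hne, h, neg_one_smul]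
  have hpm : ∀ i, (if g (ee i) = ee (f i) then (1:ℂ) else -1) = 1 ∨
      (if g (ee i) = ee (f i) then (1:ℂ) else -1) = -1 := by
    intro i; split <;> simp
  have hinj : Function.Injective f := by
    intro i j hij
    set s := (if g (ee i) = ee (f i) then (1:ℂ) else -1) with hs
    set t := (if g (ee j) = ee (f j) then (1:ℂ) else -1) with ht
    have h1 : g (ee i) = s • ee (f j) := by rw [← hij]; exact hsp i
    have h2 : g (ee j) = t • ee (f j) := hsp j
    have key : t • ee i = s • ee j := by
      apply g.injective
      rw [map_smul, map_smul, h1, h2, smul_smul, smul_smul, mul_comm]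
    by_cases hij' : i = j
    · exact hij'
    · exfalso
      have hc := congrFun key i
      rw [Pi.smul_apply, Pi.smul_apply, ee_self, ee_apply_ne hij', smul_eq_mul,
        smul_eq_mul, mul_one, mul_zero] at hc
      rcases hpm j with h' | h' <;> rw [← ht] at h' <;> rw [h'] at hc <;> norm_num at hc
  have hbij : Function.Bijective f := Finite.injective_iff_bijective.mp hinj
  exact ⟨(Equiv.ofBijective f hbij, fun i => if g (ee i) = ee (f i) then (1:ℂ) else -1),
    hpm, hsp⟩

end AuxNoSym16

open Equiv Function in
lemma det_eq_sign_mul_prod {n : Type*} [DecidableEq n] [Fintype n] {R : Type*} [CommRing R]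
    (M : Matrix n n R) (p : Perm n) (d : n → R)
    (hM : ∀ i j, M i j = if i = p j then d j else 0) :
    M.det = ((Perm.sign p : ℤ) : R) * ∏ i, d i := by
  have hM' : M = (Matrix.diagonal d).submatrix ⇑(p⁻¹) id := by
    ext i j
    rw [hM i j, Matrix.submatrix_apply, Matrix.diagonal_apply, id]
    by_cases hc : i = p j
    · rw [if_pos hc, if_pos (by rw [hc, Equiv.Perm.coe_inv, Equiv.symm_apply_apply])]
      rw [hc, Equiv.Perm.coe_inv, Equiv.symm_apply_apply]
    · rw [if_neg hc, if_neg (by intro hh; exact hc (by rw [← hh, Equiv.Perm.coe_inv, Equiv.apply_symm_apply]))]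
  rw [hM', Matrix.det_permute (p⁻¹) (Matrix.diagonal d), Matrix.det_diagonal,
    Equiv.Perm.sign_inv]

noncomputable section Aux2NoSym16

open Equiv Function

lemma det_isSP {g : (Fin 16 → ℂ) ≃ₗ[ℂ] (Fin 16 → ℂ)} {p} (h : IsSP g p) :
    LinearMap.det (g : (Fin 16 → ℂ) →ₗ[ℂ] (Fin 16 → ℂ)) =
      ((Perm.sign p.1 : ℤ) : ℂ) * ∏ i, p.2 i := by
  rw [← LinearMap.det_toMatrix (Pi.basisFun ℂ (Fin 16))]
  apply det_eq_sign_mul_prod _ p.1 p.2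
  intro i j
  rw [LinearMap.toMatrix_apply, Pi.basisFun_repr]
  have hbj : ((g : (Fin 16 → ℂ) →ₗ[ℂ] (Fin 16 → ℂ)) ((Pi.basisFun ℂ (Fin 16)) j)) = g (ee j) := by
    simp [ee]
  rw [hbj, h.2 j, Pi.smul_apply, smul_eq_mul, ee_apply]
  by_cases hc : i = p.1 j
  · rw [if_pos hc, if_pos hc, mul_one]
  · rw [if_neg hc, if_neg hc, mul_zero]

open scoped Classical in
/-- chosen signed-permutation data -/
def sd (g : (Fin 16 → ℂ) ≃ₗ[ℂ] (Fin 16 → ℂ)) : Perm (Fin 16) × (Fin 16 → ℂ) :=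
  if h : ∃ p, IsSP g p then h.choose else (1, fun _ => 1)

lemma isSP_sd {g : (Fin 16 → ℂ) ≃ₗ[ℂ] (Fin 16 → ℂ)} (h : ∃ p, IsSP g p) : IsSP g (sd g) := by
  rw [sd, dif_pos h]; exact h.choose_spec

lemma isSP_of_mem {S : Subgroup ((Fin 16 → ℂ) ≃ₗ[ℂ] (Fin 16 → ℂ))}
    (hS : (S : Set ((Fin 16 → ℂ) ≃ₗ[ℂ] (Fin 16 → ℂ))) ⊆ J1) (x : S) :
    IsSP (x : (Fin 16 → ℂ) ≃ₗ[ℂ] (Fin 16 → ℂ)) (sd x) :=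
  isSP_sd (exists_isSP (hS x.2).1)

/-- the underlying-permutation homomorphism on `S` -/
def qhom (S : Subgroup ((Fin 16 → ℂ) ≃ₗ[ℂ] (Fin 16 → ℂ)))
    (hS : (S : Set ((Fin 16 → ℂ) ≃ₗ[ℂ] (Fin 16 → ℂ))) ⊆ J1) : S →* Perm (Fin 16) where
  toFun x := (sd (x : (Fin 16 → ℂ) ≃ₗ[ℂ] (Fin 16 → ℂ))).1
  map_one' := by
    have h1 : IsSP ((1 : S) : (Fin 16 → ℂ) ≃ₗ[ℂ] (Fin 16 → ℂ)) (1, fun _ => 1) := by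
      rw [OneMemClass.coe_one]; exact isSP_one
    have h2 := isSP_sd ⟨_, h1⟩
    exact congrArg Prod.fst (isSP_unique h2 h1)
  map_mul' x y := by
    have hx := isSP_of_mem hS x
    have hy := isSP_of_mem hS y
    have hxy := isSP_of_mem hS (x * y)
    have hco : ((x * y : S) : (Fin 16 → ℂ) ≃ₗ[ℂ] (Fin 16 → ℂ)) =
        (x : (Fin 16 → ℂ) ≃ₗ[ℂ] (Fin 16 → ℂ)) * (y : (Fin 16 → ℂ) ≃ₗ[ℂ] (Fin 16 → ℂ)) := rfl
    rw [hco] at hxy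
    exact congrArg Prod.fst (isSP_unique hxy (isSP_mul hx hy))

lemma qhom_spec {S : Subgroup ((Fin 16 → ℂ) ≃ₗ[ℂ] (Fin 16 → ℂ))}
    (hS : (S : Set ((Fin 16 → ℂ) ≃ₗ[ℂ] (Fin 16 → ℂ))) ⊆ J1) (x : S) :
    IsSP (x : (Fin 16 → ℂ) ≃ₗ[ℂ] (Fin 16 → ℂ))
      (qhom S hS x, (sd (x : (Fin 16 → ℂ) ≃ₗ[ℂ] (Fin 16 → ℂ))).2) :=
  isSP_of_mem hS x

end Aux2NoSym16

section Part3

open Equiv Function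

lemma exists_ne_two (a b : Fin 16) : ∃ c : Fin 16, c ≠ a ∧ c ≠ b := by
  have h4 : ({a, b} : Finset (Fin 16)).card ≤ 2 := by
    apply (Finset.card_insert_le _ _).trans
    simp
  have hne : (Finset.univ \ ({a, b} : Finset (Fin 16))).Nonempty := by
    rw [Finset.sdiff_nonempty]
    intro hsub
    have := Finset.card_le_card hsub
    simp only [Finset.card_univ, Fintype.card_fin] at this
    omega
  obtain ⟨c, hc⟩ := hne
  rw [Finset.mem_sdiff, Finset.mem_insert, Finset.mem_singleton] at hc
  push_neg at hc
  exact ⟨c, hc.2⟩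

lemma exists_ne_four (p q r s : Fin 16) : ∃ x : Fin 16, x ≠ p ∧ x ≠ q ∧ x ≠ r ∧ x ≠ s := by
  have h4 : ({p, q, r, s} : Finset (Fin 16)).card ≤ 4 := by
    apply (Finset.card_insert_le _ _).trans
    have h3 : ({q, r, s} : Finset (Fin 16)).card ≤ 3 := by
      apply (Finset.card_insert_le _ _).trans
      have h2 : ({r, s} : Finset (Fin 16)).card ≤ 2 := by
        apply (Finset.card_insert_le _ _).trans
        simp
      omega
    omega
  have hne : (Finset.univ \ ({p, q, r, s} : Finset (Fin 16))).Nonempty := by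
    rw [Finset.sdiff_nonempty]
    intro hsub
    have := Finset.card_le_card hsub
    simp only [Finset.card_univ, Fintype.card_fin] at this
    omega
  obtain ⟨x, hx⟩ := hne
  rw [Finset.mem_sdiff] at hx
  simp only [Finset.mem_insert, Finset.mem_singleton] at hx
  push_neg at hx
  exact ⟨x, hx.2⟩

lemma fix_free_of_normal_comm {K : Subgroup (Perm (Fin 16))} (hn : K.Normal)
    (hc : ∀ x ∈ K, ∀ y ∈ K, x * y = y * x) {μ : Perm (Fin 16)} (hμ : μ ∈ K)
    {a c : Fin 16} (ha : μ a ≠ a) (hcfix : μ c = c) : False := by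
  have hba : μ a ≠ a := ha
  have hca : c ≠ a := by
    intro h; rw [h] at hcfix; exact ha hcfix
  have hcb : c ≠ μ a := by
    intro h
    exact hca (μ.injective (hcfix.trans h))
  set b := μ a with hbdef
  set τ := Equiv.swap b c with hτ
  have hρK : τ * μ * τ⁻¹ ∈ K := hn.conj_mem μ hμ τ
  have hcomm := hc μ hμ (τ * μ * τ⁻¹) hρK
  have heval := congrArg (fun f : Perm (Fin 16) => f a) hcomm
  simp only [Equiv.Perm.mul_apply] at heval
  rw [Equiv.swap_inv] at heval
  -- left side: μ (τ (μ (τ a))) ; right side: τ (μ (τ⁻¹ (μ a))) arrangement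
  have hτa : τ a = a := Equiv.swap_apply_of_ne_of_ne (Ne.symm hba) (Ne.symm hca)
  have hτb : τ b = c := Equiv.swap_apply_left b c
  have hτc : τ c = b := Equiv.swap_apply_right b c
  rw [hτa] at heval
  rw [← hbdef, hτb, hcfix, hτc] at heval
  exact hcb heval

lemma normal_comm_eq_bot (K : Subgroup (Perm (Fin 16))) (hn : K.Normal)
    (hc : ∀ x ∈ K, ∀ y ∈ K, x * y = y * x) : K = ⊥ := by
  by_contra hK
  rw [Subgroup.eq_bot_iff_forall] at hK
  push_neg at hK
  obtain ⟨σ, hσK, hσ1⟩ := hK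
  have hmove : ∃ a, σ a ≠ a := by
    by_contra hfix
    push_neg at hfix
    exact hσ1 (Equiv.ext fun a => hfix a)
  obtain ⟨a, ha⟩ := hmove
  obtain ⟨c, hca, hcb⟩ := exists_ne_two a (σ a)
  set b := σ a with hbdef
  set τ := Equiv.swap b c with hτ
  set θ := σ⁻¹ * (τ * σ * τ⁻¹) with hθ
  have hθK : θ ∈ K := K.mul_mem (K.inv_mem hσK) (hn.conj_mem σ hσK τ)
  have hab : a ≠ b := fun h => ha h.symm
  have hθa : θ a ≠ a := by
    have : θ a = σ⁻¹ c := by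
      rw [hθ]
      simp only [Equiv.Perm.mul_apply]
      rw [Equiv.swap_inv, Equiv.swap_apply_of_ne_of_ne hab hca.symm, ← hbdef,
        Equiv.swap_apply_left]
    rw [this]
    intro hcon
    rw [Equiv.Perm.inv_eq_iff_eq] at hcon
    exact hcb (by rw [hcon, hbdef])
  obtain ⟨x, hx1, hx2, hx3, hx4⟩ := exists_ne_four b c (σ⁻¹ b) (σ⁻¹ c)
  have hθx : θ x = x := by
    rw [hθ]
    simp only [Equiv.Perm.mul_apply]
    rw [Equiv.swap_inv, Equiv.swap_apply_of_ne_of_ne hx1 hx2]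
    have hσx1 : σ x ≠ b := by
      intro h; exact hx3 (by rw [← h, Equiv.Perm.coe_inv, Equiv.symm_apply_apply])
    have hσx2 : σ x ≠ c := by
      intro h; exact hx4 (by rw [← h, Equiv.Perm.coe_inv, Equiv.symm_apply_apply])
    rw [Equiv.swap_apply_of_ne_of_ne hσx1 hσx2, Equiv.Perm.coe_inv, Equiv.symm_apply_apply]
  exact fix_free_of_normal_comm hn hc hθK hθa hθx

end Part3

section Part4

open Equiv Function

lemma mul_ee {S : Subgroup ((Fin 16 → ℂ) ≃ₗ[ℂ] (Fin 16 → ℂ))}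
    (hS : (S : Set ((Fin 16 → ℂ) ≃ₗ[ℂ] (Fin 16 → ℂ))) ⊆ J1) (x y : S) (i : Fin 16) :
    ((x : (Fin 16 → ℂ) ≃ₗ[ℂ] (Fin 16 → ℂ)) * (y : (Fin 16 → ℂ) ≃ₗ[ℂ] (Fin 16 → ℂ))) (ee i) =
      ((sd (y : (Fin 16 → ℂ) ≃ₗ[ℂ] (Fin 16 → ℂ))).2 i *
        (sd (x : (Fin 16 → ℂ) ≃ₗ[ℂ] (Fin 16 → ℂ))).2 (qhom S hS y i)) •
        ee (qhom S hS x (qhom S hS y i)) := by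
  have hx := (isSP_of_mem hS x).2 (qhom S hS y i)
  have hy := (isSP_of_mem hS y).2 i
  show (x : (Fin 16 → ℂ) ≃ₗ[ℂ] (Fin 16 → ℂ)) ((y : (Fin 16 → ℂ) ≃ₗ[ℂ] (Fin 16 → ℂ)) (ee i)) = _
  rw [hy, map_smul]
  rw [show (sd (y : (Fin 16 → ℂ) ≃ₗ[ℂ] (Fin 16 → ℂ))).1 i = qhom S hS y i from rfl] at *
  rw [hx, smul_smul]
  rfl

lemma scal_eq {a b : ℂ} {p : Fin 16} (h : a • ee p = b • ee p) : a = b := by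
  have := congrFun h p
  simpa [ee_self] using this

lemma scal_eq_one {a : ℂ} {p : Fin 16} (h : a • ee p = ee p) : a = 1 := by
  have := congrFun h p
  rw [Pi.smul_apply, ee_self, smul_eq_mul, mul_one] at this
  exact this

lemma scal_eq_neg {a : ℂ} {p : Fin 16} (h : a • ee p = -ee p) : a = -1 := by
  have := congrFun h p
  rw [Pi.smul_apply, Pi.neg_apply, ee_self, smul_eq_mul, mul_one] at this
  exact this

variable {S : Subgroup ((Fin 16 → ℂ) ≃ₗ[ℂ] (Fin 16 → ℂ))}
  (hS : (S : Set ((Fin 16 → ℂ) ≃ₗ[ℂ] (Fin 16 → ℂ))) ⊆ J1)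

lemma sq_step
    (hker : ∀ x : S, qhom S hS x = 1 →
      (∀ v, (x : (Fin 16 → ℂ) ≃ₗ[ℂ] (Fin 16 → ℂ)) v = v) ∨
      (∀ v, (x : (Fin 16 → ℂ) ≃ₗ[ℂ] (Fin 16 → ℂ)) v = -v))
    (x : S) (a b j : Fin 16) (hq : qhom S hS x = swap a b)
    (hab : a ≠ b) (hja : j ≠ a) (hjb : j ≠ b) :
    (sd (x : (Fin 16 → ℂ) ≃ₗ[ℂ] (Fin 16 → ℂ))).2 a *
      (sd (x : (Fin 16 → ℂ) ≃ₗ[ℂ] (Fin 16 → ℂ))).2 b = 1 := by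
  set ε := (sd (x : (Fin 16 → ℂ) ≃ₗ[ℂ] (Fin 16 → ℂ))).2 with hε
  have hsq : qhom S hS (x * x) = 1 := by rw [map_mul, hq, Equiv.swap_mul_self]
  have happ : ∀ i, ((x : (Fin 16 → ℂ) ≃ₗ[ℂ] (Fin 16 → ℂ)) *
      (x : (Fin 16 → ℂ) ≃ₗ[ℂ] (Fin 16 → ℂ))) (ee i) =
      (ε i * ε (swap a b i)) • ee (swap a b (swap a b i)) := by
    intro i
    rw [mul_ee hS x x i, hq]
  rcases hker (x * x) hsq with hpos | hneg
  · have h1 := hpos (ee a)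
    rw [show ((x * x : S) : (Fin 16 → ℂ) ≃ₗ[ℂ] (Fin 16 → ℂ)) =
      (x : (Fin 16 → ℂ) ≃ₗ[ℂ] (Fin 16 → ℂ)) * (x : (Fin 16 → ℂ) ≃ₗ[ℂ] (Fin 16 → ℂ)) from rfl,
      happ a, Equiv.swap_apply_left, Equiv.swap_apply_right] at h1
    exact scal_eq_one h1
  · exfalso
    have h2 := hneg (ee j)
    rw [show ((x * x : S) : (Fin 16 → ℂ) ≃ₗ[ℂ] (Fin 16 → ℂ)) =
      (x : (Fin 16 → ℂ) ≃ₗ[ℂ] (Fin 16 → ℂ)) * (x : (Fin 16 → ℂ) ≃ₗ[ℂ] (Fin 16 → ℂ)) from rfl,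
      happ j, Equiv.swap_apply_of_ne_of_ne hja hjb,
      Equiv.swap_apply_of_ne_of_ne hja hjb] at h2
    have := scal_eq_neg h2
    rw [(isSP_of_mem hS x).sq_one j] at this
    norm_num at this

lemma pair_step
    (hker : ∀ x : S, qhom S hS x = 1 →
      (∀ v, (x : (Fin 16 → ℂ) ≃ₗ[ℂ] (Fin 16 → ℂ)) v = v) ∨
      (∀ v, (x : (Fin 16 → ℂ) ≃ₗ[ℂ] (Fin 16 → ℂ)) v = -v))
    (x y : S) (a b c d j : Fin 16)
    (hqx : qhom S hS x = swap a b) (hqy : qhom S hS y = swap c d)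
    (hca : c ≠ a) (hcb : c ≠ b) (hda : d ≠ a) (hdb : d ≠ b) (hcd : c ≠ d)
    (hja : j ≠ a) (hjb : j ≠ b) (hjc : j ≠ c) (hjd : j ≠ d) :
    (sd (x : (Fin 16 → ℂ) ≃ₗ[ℂ] (Fin 16 → ℂ))).2 c *
      (sd (x : (Fin 16 → ℂ) ≃ₗ[ℂ] (Fin 16 → ℂ))).2 d = 1 := by
  set εx := (sd (x : (Fin 16 → ℂ) ≃ₗ[ℂ] (Fin 16 → ℂ))).2 with hεx
  set εy := (sd (y : (Fin 16 → ℂ) ≃ₗ[ℂ] (Fin 16 → ℂ))).2 with hεy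
  -- the two swaps commute
  have hdisj : (swap a b).Disjoint (swap c d) := by
    intro p
    by_cases hpa : p = a
    · right; rw [hpa]; exact Equiv.swap_apply_of_ne_of_ne (Ne.symm hca) (Ne.symm hda)
    · by_cases hpb : p = b
      · right; rw [hpb]; exact Equiv.swap_apply_of_ne_of_ne (Ne.symm hcb) (Ne.symm hdb)
      · left; exact Equiv.swap_apply_of_ne_of_ne hpa hpb
  have hcomm : swap a b * swap c d = swap c d * swap a b := hdisj.commute.eq
  have hq1 : qhom S hS (x * y * x⁻¹ * y⁻¹) = 1 := by
    rw [map_mul, map_mul, map_mul, map_inv, map_inv, hqx, hqy, hcomm]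
    group
  -- uniform sign s with (x y) v = s • (y x) v
  have hCmul : ((((x * y * x⁻¹ * y⁻¹ : S)) : (Fin 16 → ℂ) ≃ₗ[ℂ] (Fin 16 → ℂ)) *
      ((y : (Fin 16 → ℂ) ≃ₗ[ℂ] (Fin 16 → ℂ)) * (x : (Fin 16 → ℂ) ≃ₗ[ℂ] (Fin 16 → ℂ)))) =
      (x : (Fin 16 → ℂ) ≃ₗ[ℂ] (Fin 16 → ℂ)) * (y : (Fin 16 → ℂ) ≃ₗ[ℂ] (Fin 16 → ℂ)) := by
    rw [show (((x * y * x⁻¹ * y⁻¹ : S)) : (Fin 16 → ℂ) ≃ₗ[ℂ] (Fin 16 → ℂ)) =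
      (x : (Fin 16 → ℂ) ≃ₗ[ℂ] (Fin 16 → ℂ)) * (y : (Fin 16 → ℂ) ≃ₗ[ℂ] (Fin 16 → ℂ)) *
      (x : (Fin 16 → ℂ) ≃ₗ[ℂ] (Fin 16 → ℂ))⁻¹ * (y : (Fin 16 → ℂ) ≃ₗ[ℂ] (Fin 16 → ℂ))⁻¹ from rfl]
    group
  have hs : ∃ s : ℂ, (s = 1 ∨ s = -1) ∧ ∀ v,
      ((x : (Fin 16 → ℂ) ≃ₗ[ℂ] (Fin 16 → ℂ)) * (y : (Fin 16 → ℂ) ≃ₗ[ℂ] (Fin 16 → ℂ))) v =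
      s • (((y : (Fin 16 → ℂ) ≃ₗ[ℂ] (Fin 16 → ℂ)) * (x : (Fin 16 → ℂ) ≃ₗ[ℂ] (Fin 16 → ℂ))) v) := by
    rcases hker (x * y * x⁻¹ * y⁻¹) hq1 with hpos | hneg
    · refine ⟨1, Or.inl rfl, fun v => ?_⟩
      rw [one_smul, ← hCmul]
      exact hpos _
    · refine ⟨-1, Or.inr rfl, fun v => ?_⟩
      rw [neg_one_smul, ← hCmul]
      exact hneg _
  obtain ⟨s, _hs01, hsv⟩ := hs
  -- evaluate at ee j to get s = 1
  have hj := hsv (ee j)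
  rw [mul_ee hS x y j, mul_ee hS y x j, hqx, hqy] at hj
  simp only [Equiv.swap_apply_of_ne_of_ne hjc hjd, Equiv.swap_apply_of_ne_of_ne hja hjb,
    smul_smul] at hj
  have hsj := scal_eq hj
  have hs1 : s = 1 := by
    have hne : εx j * εy j ≠ 0 :=
      mul_ne_zero ((isSP_of_mem hS x).sign_ne_zero j) ((isSP_of_mem hS y).sign_ne_zero j)
    have : (1 : ℂ) * (εx j * εy j) = s * (εx j * εy j) := by
      rw [one_mul, ← hsj]; ring
    exact (mul_right_cancel₀ hne this.symm)
  -- evaluate at ee c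
  have hcv := hsv (ee c)
  rw [hs1, one_smul, mul_ee hS x y c, mul_ee hS y x c, hqx, hqy] at hcv
  simp only [Equiv.swap_apply_left, Equiv.swap_apply_of_ne_of_ne hda hdb,
    Equiv.swap_apply_of_ne_of_ne hca hcb] at hcv
  have hscal := scal_eq hcv
  -- hscal : εy c * εx d = εx c * εy c
  have hyc : εy c ≠ 0 := (isSP_of_mem hS y).sign_ne_zero c
  have hxd : εx d = εx c := by
    have : εy c * εx d = εy c * εx c := by rw [hscal]; ring
    exact mul_left_cancel₀ hyc this
  rw [hxd]
  exact (isSP_of_mem hS x).sq_one c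

end Part4

section Part5

open Equiv Function

lemma core_contradiction {S : Subgroup ((Fin 16 → ℂ) ≃ₗ[ℂ] (Fin 16 → ℂ))}
    (hS : (S : Set ((Fin 16 → ℂ) ≃ₗ[ℂ] (Fin 16 → ℂ))) ⊆ J1)
    (hker : ∀ x : S, qhom S hS x = 1 →
      (∀ v, (x : (Fin 16 → ℂ) ≃ₗ[ℂ] (Fin 16 → ℂ)) v = v) ∨
      (∀ v, (x : (Fin 16 → ℂ) ≃ₗ[ℂ] (Fin 16 → ℂ)) v = -v))
    (hsur : ∀ σ : Perm (Fin 16), ∃ x : S, qhom S hS x = σ) : False := by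
  obtain ⟨x0, h0⟩ := hsur (swap 0 1)
  obtain ⟨x1, h1⟩ := hsur (swap 2 3)
  obtain ⟨x2, h2⟩ := hsur (swap 4 5)
  obtain ⟨x3, h3⟩ := hsur (swap 6 7)
  obtain ⟨x4, h4⟩ := hsur (swap 8 9)
  obtain ⟨x5, h5⟩ := hsur (swap 10 11)
  obtain ⟨x6, h6⟩ := hsur (swap 12 13)
  obtain ⟨x7, h7⟩ := hsur (swap 14 15)
  set ε := (sd (x0 : (Fin 16 → ℂ) ≃ₗ[ℂ] (Fin 16 → ℂ))).2 with hε
  have e01 : ε 0 * ε 1 = 1 := sq_step hS hker x0 0 1 2 h0 (by decide) (by decide) (by decide)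
  have e23 : ε 2 * ε 3 = 1 := pair_step hS hker x0 x1 0 1 2 3 4 h0 h1
    (by decide) (by decide) (by decide) (by decide) (by decide)
    (by decide) (by decide) (by decide) (by decide)
  have e45 : ε 4 * ε 5 = 1 := pair_step hS hker x0 x2 0 1 4 5 2 h0 h2
    (by decide) (by decide) (by decide) (by decide) (by decide)
    (by decide) (by decide) (by decide) (by decide)
  have e67 : ε 6 * ε 7 = 1 := pair_step hS hker x0 x3 0 1 6 7 2 h0 h3
    (by decide) (by decide) (by decide) (by decide) (by decide)
    (by decide) (by decide) (by decide) (by decide)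
  have e89 : ε 8 * ε 9 = 1 := pair_step hS hker x0 x4 0 1 8 9 2 h0 h4
    (by decide) (by decide) (by decide) (by decide) (by decide)
    (by decide) (by decide) (by decide) (by decide)
  have e1011 : ε 10 * ε 11 = 1 := pair_step hS hker x0 x5 0 1 10 11 2 h0 h5
    (by decide) (by decide) (by decide) (by decide) (by decide)
    (by decide) (by decide) (by decide) (by decide)
  have e1213 : ε 12 * ε 13 = 1 := pair_step hS hker x0 x6 0 1 12 13 2 h0 h6
    (by decide) (by decide) (by decide) (by decide) (by decide)
    (by decide) (by decide) (by decide) (by decide)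
  have e1415 : ε 14 * ε 15 = 1 := pair_step hS hker x0 x7 0 1 14 15 2 h0 h7
    (by decide) (by decide) (by decide) (by decide) (by decide)
    (by decide) (by decide) (by decide) (by decide)
  -- determinant gives product = -1
  have hd := det_isSP (qhom_spec hS x0)
  have hdet1 : LinearMap.det
      ((x0 : (Fin 16 → ℂ) ≃ₗ[ℂ] (Fin 16 → ℂ)) : (Fin 16 → ℂ) →ₗ[ℂ] (Fin 16 → ℂ)) = 1 :=
    (hS x0.2).2
  rw [hdet1, h0] at hd
  have hsign : Perm.sign (swap (0 : Fin 16) 1) = -1 := Equiv.Perm.sign_swap (by decide)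
  rw [hsign] at hd
  push_cast at hd
  -- hd : 1 = -1 * ∏ i, ε i
  have hprod : ∏ i : Fin 16, ε i = -1 := by rw [hε]; linear_combination hd
  -- now expand the product
  open Fin.NatCast in
  have hre : ∏ i : Fin 16, ε i = ∏ i ∈ Finset.range 16, ε (i : Fin 16) := by
    calc ∏ i : Fin 16, ε i = ∏ i : Fin 16, ε ((i : ℕ) : Fin 16) := by
          apply Finset.prod_congr rfl
          intro i _
          rw [Fin.cast_val_eq_self]
      _ = _ := Fin.prod_univ_eq_prod_range (fun i : ℕ => ε (i : Fin 16)) 16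
  rw [hre] at hprod
  simp only [Finset.prod_range_succ, Finset.prod_range_zero, one_mul] at hprod
  norm_num at hprod
  -- hprod should now be in terms of ε at Fin-numerals
  have key : (ε 0 * ε 1) * ((ε 2 * ε 3) * ((ε 4 * ε 5) * ((ε 6 * ε 7) * ((ε 8 * ε 9) *
      ((ε 10 * ε 11) * ((ε 12 * ε 13) * (ε 14 * ε 15))))))) = -1 := by
    rw [← hprod]; ring
  rw [e01, e23, e45, e67, e89, e1011, e1213, e1415] at key
  norm_num at key

end Part5

section Part6

open Equiv Function

variable {S : Subgroup ((Fin 16 → ℂ) ≃ₗ[ℂ] (Fin 16 → ℂ))}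
  (hS : (S : Set ((Fin 16 → ℂ) ≃ₗ[ℂ] (Fin 16 → ℂ))) ⊆ J1)

include hS

lemma ker_comm (x : S) (hx : qhom S hS x = 1) (y : S) (hy : qhom S hS y = 1) :
    x * y = y * x := by
  apply Subtype.ext
  show ((x * y : S) : (Fin 16 → ℂ) ≃ₗ[ℂ] (Fin 16 → ℂ)) = ((y * x : S) : (Fin 16 → ℂ) ≃ₗ[ℂ] (Fin 16 → ℂ))
  apply LinearEquiv.toLinearMap_injective
  apply Module.Basis.ext (Pi.basisFun ℂ (Fin 16))
  intro i
  have hb : (Pi.basisFun ℂ (Fin 16)) i = ee i := by simp [ee]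
  rw [hb]
  simp only [LinearEquiv.coe_coe]
  show ((x : (Fin 16 → ℂ) ≃ₗ[ℂ] (Fin 16 → ℂ)) * (y : (Fin 16 → ℂ) ≃ₗ[ℂ] (Fin 16 → ℂ))) (ee i) =
    ((y : (Fin 16 → ℂ) ≃ₗ[ℂ] (Fin 16 → ℂ)) * (x : (Fin 16 → ℂ) ≃ₗ[ℂ] (Fin 16 → ℂ))) (ee i)
  rw [mul_ee hS x y i, mul_ee hS y x i, hx, hy]
  simp [mul_comm]

lemma range_top_surj (hrange : (qhom S hS).range = ⊤) :
    ∀ σ : Perm (Fin 16), ∃ x : S, qhom S hS x = σ := by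
  intro σ
  have : σ ∈ (qhom S hS).range := by rw [hrange]; trivial
  exact this

lemma case1 (ψ : S ≃* Perm (Fin 16)) : False := by
  classical
  have hKbot : Subgroup.map ψ.toMonoidHom (qhom S hS).ker = ⊥ := by
    apply normal_comm_eq_bot
    · exact Subgroup.Normal.map (MonoidHom.normal_ker _) ψ.toMonoidHom ψ.surjective
    · intro a ha b hb
      rw [Subgroup.mem_map] at ha hb
      obtain ⟨x, hx, rfl⟩ := ha
      obtain ⟨y, hy, rfl⟩ := hb
      rw [MonoidHom.mem_ker] at hx hy
      rw [← map_mul, ← map_mul, ker_comm hS x hx y hy]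
  have hinj : Function.Injective (qhom S hS) := by
    rw [← MonoidHom.ker_eq_bot_iff, Subgroup.eq_bot_iff_forall]
    intro x hx
    have hmem : ψ.toMonoidHom x ∈ Subgroup.map ψ.toMonoidHom (qhom S hS).ker := ⟨x, hx, rfl⟩
    rw [hKbot, Subgroup.mem_bot] at hmem
    exact ψ.injective (by rw [show ψ x = ψ.toMonoidHom x from rfl, hmem, map_one])
  have hrange : (qhom S hS).range = ⊤ := by
    apply Subgroup.eq_top_of_card_eq
    calc Nat.card (qhom S hS).range = Nat.card S :=
          (Nat.card_congr (MonoidHom.ofInjective hinj).toEquiv).symm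
      _ = Nat.card (Perm (Fin 16)) := Nat.card_congr ψ.toEquiv
  have hker : ∀ x : S, qhom S hS x = 1 →
      (∀ v, (x : (Fin 16 → ℂ) ≃ₗ[ℂ] (Fin 16 → ℂ)) v = v) ∨
      (∀ v, (x : (Fin 16 → ℂ) ≃ₗ[ℂ] (Fin 16 → ℂ)) v = -v) := by
    intro x hx
    left
    have hx1 : x = 1 := hinj (by rw [hx, map_one])
    intro v
    rw [hx1]
    rfl
  exact core_contradiction hS hker (range_top_surj hS hrange)

lemma case2 (π : S →* Perm (Fin 16)) (hsurj : Function.Surjective π)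
    (hcent : π.ker ≤ Subgroup.center S) (hcard : Nat.card π.ker = 2) : False := by
  classical
  -- the kernel of π has a unique nontrivial element z, central in S
  haveI hfin : Finite π.ker := Nat.finite_of_card_ne_zero (by rw [hcard]; omega)
  haveI : Fintype π.ker := Fintype.ofFinite _
  have hc2 : (Finset.univ : Finset π.ker).card = 2 := by
    rw [← Fintype.card, ← Nat.card_eq_fintype_card, hcard]
  obtain ⟨u, v, huv, huniv⟩ := Finset.card_eq_two.mp hc2
  have hall : ∀ w : π.ker, w = u ∨ w = v := by
    intro w
    have : w ∈ (Finset.univ : Finset π.ker) := Finset.mem_univ w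
    rw [huniv] at this
    simpa using this
  have hexz : ∃ z' : π.ker, z' ≠ 1 ∧ ∀ w : π.ker, w = 1 ∨ w = z' := by
    rcases hall 1 with h1 | h1
    · exact ⟨v, by rw [h1]; exact (Ne.symm huv), fun w => by
        rcases hall w with h | h
        · left; rw [h, ← h1]
        · right; exact h⟩
    · exact ⟨u, by rw [h1]; exact huv, fun w => by
        rcases hall w with h | h
        · right; exact h
        · left; rw [h, ← h1]⟩
  obtain ⟨z', hz'1, huniq'⟩ := hexz
  set z : S := (z' : S) with hzdef
  have hzker : z ∈ π.ker := z'.2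
  have hz1 : z ≠ 1 := by
    intro h
    exact hz'1 (Subtype.ext h)
  have huniq : ∀ w : S, w ∈ π.ker → w = 1 ∨ w = z := by
    intro w hw
    rcases huniq' ⟨w, hw⟩ with h | h
    · left; exact congrArg Subtype.val h
    · right; exact congrArg Subtype.val h
  -- kernel of q is contained in kernel of π
  have hAle : (qhom S hS).ker ≤ π.ker := by
    have hbot : Subgroup.map π (qhom S hS).ker = ⊥ := by
      apply normal_comm_eq_bot
      · exact Subgroup.Normal.map (MonoidHom.normal_ker _) π hsurj
      · intro a ha b hb
        rw [Subgroup.mem_map] at ha hb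
        obtain ⟨x, hx, rfl⟩ := ha
        obtain ⟨y, hy, rfl⟩ := hb
        rw [MonoidHom.mem_ker] at hx hy
        rw [← map_mul, ← map_mul, ker_comm hS x hx y hy]
    intro x hx
    have hmem : π x ∈ Subgroup.map π (qhom S hS).ker := ⟨x, hx, rfl⟩
    rw [hbot, Subgroup.mem_bot] at hmem
    exact hmem
  -- q cannot be injective
  have hnotinj : ¬ Function.Injective (qhom S hS) := by
    intro hinj
    haveI : Finite S := Finite.of_injective _ hinj
    have hle : Nat.card S ≤ Nat.card (Perm (Fin 16)) :=
      Nat.card_le_card_of_injective _ hinj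
    have hScard : Nat.card S = Nat.card (Perm (Fin 16)) * 2 := by
      rw [Subgroup.card_eq_card_quotient_mul_card_subgroup π.ker, hcard,
        Nat.card_congr (QuotientGroup.quotientKerEquivOfSurjective π hsurj).toEquiv]
    have hpos : 0 < Nat.card (Perm (Fin 16)) := Nat.card_pos
    omega
  -- hence z ∈ ker q and ker q = ker π
  have hzq : qhom S hS z = 1 := by
    have : ∃ x : S, x ∈ (qhom S hS).ker ∧ x ≠ 1 := by
      by_contra hcon
      push_neg at hcon
      apply hnotinj
      rw [← MonoidHom.ker_eq_bot_iff, Subgroup.eq_bot_iff_forall]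
      intro x hx
      by_contra hx1
      exact hx1 (hcon x hx)
    obtain ⟨x, hxk, hx1⟩ := this
    rcases huniq x (hAle hxk) with h | h
    · exact absurd h hx1
    · rw [← h]; exact hxk
  have hkerq : (qhom S hS).ker = π.ker := by
    apply le_antisymm hAle
    intro w hw
    rcases huniq w hw with h | h
    · rw [h]; exact Subgroup.one_mem _
    · rw [h, MonoidHom.mem_ker]; exact hzq
  -- q is surjective
  have hrange : (qhom S hS).range = ⊤ := by
    apply Subgroup.eq_top_of_card_eq
    calc Nat.card (qhom S hS).range
        = Nat.card (S ⧸ (qhom S hS).ker) :=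
          (Nat.card_congr (QuotientGroup.quotientKerEquivRange (qhom S hS)).toEquiv).symm
      _ = Nat.card (S ⧸ π.ker) := by rw [hkerq]
      _ = Nat.card (Perm (Fin 16)) :=
          Nat.card_congr (QuotientGroup.quotientKerEquivOfSurjective π hsurj).toEquiv
  have hsur := range_top_surj hS hrange
  -- the diagonal entries of z are constant
  have hzc : z ∈ Subgroup.center S := hcent hzker
  have hδ : ∀ i j : Fin 16, (sd (z : (Fin 16 → ℂ) ≃ₗ[ℂ] (Fin 16 → ℂ))).2 i =
      (sd (z : (Fin 16 → ℂ) ≃ₗ[ℂ] (Fin 16 → ℂ))).2 j := by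
    intro i j
    by_cases hij : i = j
    · rw [hij]
    · obtain ⟨g, hg⟩ := hsur (swap i j)
      have hcommzg : g * z = z * g := (Subgroup.mem_center_iff.mp hzc) g
      have happ := congrArg
        (fun w : S => ((w : (Fin 16 → ℂ) ≃ₗ[ℂ] (Fin 16 → ℂ))) (ee i)) hcommzg
      rw [show ((g * z : S) : (Fin 16 → ℂ) ≃ₗ[ℂ] (Fin 16 → ℂ)) =
          (g : (Fin 16 → ℂ) ≃ₗ[ℂ] (Fin 16 → ℂ)) * (z : (Fin 16 → ℂ) ≃ₗ[ℂ] (Fin 16 → ℂ)) from rfl,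
        show ((z * g : S) : (Fin 16 → ℂ) ≃ₗ[ℂ] (Fin 16 → ℂ)) =
          (z : (Fin 16 → ℂ) ≃ₗ[ℂ] (Fin 16 → ℂ)) * (g : (Fin 16 → ℂ) ≃ₗ[ℂ] (Fin 16 → ℂ)) from rfl,
        mul_ee hS g z i, mul_ee hS z g i, hg, hzq] at happ
      simp only [Equiv.Perm.one_apply, Equiv.swap_apply_left] at happ
      have := scal_eq happ
      have hgne : (sd (g : (Fin 16 → ℂ) ≃ₗ[ℂ] (Fin 16 → ℂ))).2 i ≠ 0 :=
        (isSP_of_mem hS g).sign_ne_zero i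
      -- this : δ i * εg i = εg i * δ j
      have h2 : (sd (g : (Fin 16 → ℂ) ≃ₗ[ℂ] (Fin 16 → ℂ))).2 i *
          (sd (z : (Fin 16 → ℂ) ≃ₗ[ℂ] (Fin 16 → ℂ))).2 i =
          (sd (g : (Fin 16 → ℂ) ≃ₗ[ℂ] (Fin 16 → ℂ))).2 i *
          (sd (z : (Fin 16 → ℂ) ≃ₗ[ℂ] (Fin 16 → ℂ))).2 j := by
        rw [← this]; ring
      exact mul_left_cancel₀ hgne h2
  -- z acts as -1 (it cannot act as +1 since z ≠ 1)
  have hzdiag : ∀ i, (z : (Fin 16 → ℂ) ≃ₗ[ℂ] (Fin 16 → ℂ)) (ee i) =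
      (sd (z : (Fin 16 → ℂ) ≃ₗ[ℂ] (Fin 16 → ℂ))).2 i • ee i := by
    intro i
    have := (isSP_of_mem hS z).2 i
    rw [show (sd (z : (Fin 16 → ℂ) ≃ₗ[ℂ] (Fin 16 → ℂ))).1 = qhom S hS z from rfl, hzq] at this
    simpa using this
  have hzneg : ∀ v, (z : (Fin 16 → ℂ) ≃ₗ[ℂ] (Fin 16 → ℂ)) v = -v := by
    rcases (isSP_of_mem hS z).1 0 with hone | hneg
    · exfalso
      apply hz1
      apply Subtype.ext
      show (z : (Fin 16 → ℂ) ≃ₗ[ℂ] (Fin 16 → ℂ)) = 1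
      apply LinearEquiv.toLinearMap_injective
      apply Module.Basis.ext (Pi.basisFun ℂ (Fin 16))
      intro i
      have hb : (Pi.basisFun ℂ (Fin 16)) i = ee i := by simp [ee]
      rw [hb]
      simp only [LinearEquiv.coe_coe]
      show (z : (Fin 16 → ℂ) ≃ₗ[ℂ] (Fin 16 → ℂ)) (ee i) = (1 : (Fin 16 → ℂ) ≃ₗ[ℂ] (Fin 16 → ℂ)) (ee i)
      rw [hzdiag i, hδ i 0, hone, one_smul]
      rfl
    · have hlin : ((z : (Fin 16 → ℂ) ≃ₗ[ℂ] (Fin 16 → ℂ)) :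
          (Fin 16 → ℂ) →ₗ[ℂ] (Fin 16 → ℂ)) = -LinearMap.id := by
        apply Module.Basis.ext (Pi.basisFun ℂ (Fin 16))
        intro i
        have hb : (Pi.basisFun ℂ (Fin 16)) i = ee i := by simp [ee]
        rw [hb]
        simp only [LinearEquiv.coe_coe, LinearMap.neg_apply, LinearMap.id_coe, id_eq]
        rw [hzdiag i, hδ i 0, hneg, neg_one_smul]
      intro v
      have := congrArg (fun f : (Fin 16 → ℂ) →ₗ[ℂ] (Fin 16 → ℂ) => f v) hlin
      simpa using this
  -- conclude via the core contradiction
  have hker : ∀ x : S, qhom S hS x = 1 →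
      (∀ v, (x : (Fin 16 → ℂ) ≃ₗ[ℂ] (Fin 16 → ℂ)) v = v) ∨
      (∀ v, (x : (Fin 16 → ℂ) ≃ₗ[ℂ] (Fin 16 → ℂ)) v = -v) := by
    intro x hx
    have hxk : x ∈ π.ker := hAle hx
    rcases huniq x hxk with h | h
    · left; intro v; rw [h]; rfl
    · right; intro v; rw [h]; exact hzneg v
  exact core_contradiction hS hker hsur

end Part6


/-- `J₁` contains no subgroup isomorphic to `Sym₁₆`, and no subgroup `S` with a
central subgroup `Z ≤ Z(S)` of order `2` such that `S/Z ≅ Sym₁₆` (the latter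
expressed via a surjective homomorphism `π : S → Sym₁₆` whose kernel is central
of order `2`). -/
theorem no_sym16_and_no_central_ext_of_sym16_in_J1 :
    (¬ ∃ S : Subgroup ((Fin 16 → ℂ) ≃ₗ[ℂ] (Fin 16 → ℂ)),
        (S : Set ((Fin 16 → ℂ) ≃ₗ[ℂ] (Fin 16 → ℂ))) ⊆ J1 ∧
        Nonempty (S ≃* Equiv.Perm (Fin 16))) ∧
    (¬ ∃ S : Subgroup ((Fin 16 → ℂ) ≃ₗ[ℂ] (Fin 16 → ℂ)),
        (S : Set ((Fin 16 → ℂ) ≃ₗ[ℂ] (Fin 16 → ℂ))) ⊆ J1 ∧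
        ∃ π : S →* Equiv.Perm (Fin 16), Function.Surjective π ∧
          π.ker ≤ Subgroup.center S ∧ Nat.card π.ker = 2) := by
  constructor
  · rintro ⟨S, hS, ⟨ψ⟩⟩
    exact case1 hS ψ
  · rintro ⟨S, hS, π, hsurj, hcent, hcard⟩
    exact case2 hS π hsurj hcent hcard
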